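/- For an unregularized two-layer linear autoencoder, every global minimizer of ||X - W2 W1 X||_F^2 over W1 ∈ R^{k×d}, W2 ∈ R^{d×k} satisfies that W2 W1 is the orthogonal projection onto the span of the top k eigenvectors of XX^T, provided the k-th and (k+1)-th eigenvalues of XX^T are distinct. -/

import Mathlib

open Matrix

/-- Squared Frobenius norm of a real matrix. -/
noncomputable def frobSq {m n : ℕ} (M : Matrix (Fin m) (Fin n) ℝ) : ℝ :=
  ∑ i, ∑ j, (M i j) ^ 2

/-- `B` satisfies the four Moore–Penrose conditions for `A`. -/
def IsMoorePenroseInv {m n : ℕ} (A : Matrix (Fin m) (Fin n) ℝ)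
    (B : Matrix (Fin n) (Fin m) ℝ) : Prop :=
  A * B * A = A ∧ B * A * B = B ∧ (A * B)ᵀ = A * B ∧ (B * A)ᵀ = B * A

/-- `P` is a best rank-`k` approximation of `X` in Frobenius norm. -/
noncomputable def IsBestRankApprox {m n : ℕ} (k : ℕ) (X P : Matrix (Fin m) (Fin n) ℝ) : Prop :=
  P.rank ≤ k ∧ ∀ Q : Matrix (Fin m) (Fin n) ℝ, Q.rank ≤ k → frobSq (X - P) ≤ frobSq (X - Q)

namespace BHaux

lemma frobSq_eq_trace {m n : ℕ} (A : Matrix (Fin m) (Fin n) ℝ) :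
    frobSq A = (A * Aᵀ).trace := by
  simp [frobSq, Matrix.trace, Matrix.diag, Matrix.mul_apply, sq]

lemma frobSq_nonneg {m n : ℕ} (A : Matrix (Fin m) (Fin n) ℝ) : 0 ≤ frobSq A :=
  Finset.sum_nonneg fun _ _ => Finset.sum_nonneg fun _ _ => sq_nonneg _

lemma frobSq_eq_zero_of_nonpos {m n : ℕ} {A : Matrix (Fin m) (Fin n) ℝ}
    (h : frobSq A ≤ 0) : A = 0 := by
  have h0 : frobSq A = 0 := le_antisymm h (frobSq_nonneg A)
  have h1 : ∀ i ∈ (Finset.univ : Finset (Fin m)), (∑ j, (A i j) ^ 2) = 0 :=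
    (Finset.sum_eq_zero_iff_of_nonneg
      (fun i _ => Finset.sum_nonneg fun j _ => sq_nonneg _)).mp h0
  ext i j
  have h2 : ∀ j ∈ (Finset.univ : Finset (Fin n)), (A i j) ^ 2 = 0 :=
    (Finset.sum_eq_zero_iff_of_nonneg (fun j _ => sq_nonneg _)).mp
      (h1 i (Finset.mem_univ i))
  have := h2 j (Finset.mem_univ j)
  have h3 := (pow_eq_zero_iff two_ne_zero).mp this
  simpa using h3

lemma frobSq_mul_orth {m n : ℕ} (G : Matrix (Fin m) (Fin m) ℝ) (hG : G * Gᵀ = 1)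
    (A : Matrix (Fin m) (Fin n) ℝ) : frobSq (G * A) = frobSq A := by
  rw [frobSq_eq_trace, frobSq_eq_trace, Matrix.transpose_mul]
  have h1 : G * A * (Aᵀ * Gᵀ) = (G * (A * Aᵀ)) * Gᵀ := by
    simp only [Matrix.mul_assoc]
  have hG2 : Gᵀ * G = 1 := mul_eq_one_comm.mp hG
  rw [h1, Matrix.trace_mul_comm, ← Matrix.mul_assoc, hG2, Matrix.one_mul]

lemma frobSq_sub_mul {d N : ℕ} (Y : Matrix (Fin d) (Fin N) ℝ)
    (M : Matrix (Fin d) (Fin d) ℝ) (hYM : Y * Yᵀ = M * Mᵀ)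
    (B : Matrix (Fin d) (Fin d) ℝ) : frobSq (Y - B * Y) = frobSq (M - B * M) := by
  have key : ∀ {n : ℕ} (Z : Matrix (Fin d) (Fin n) ℝ),
      (Z - B * Z) * (Z - B * Z)ᵀ =
        Z * Zᵀ - B * (Z * Zᵀ) - (Z * Zᵀ) * Bᵀ + B * (Z * Zᵀ) * Bᵀ := by
    intro n Z
    rw [Matrix.transpose_sub, Matrix.transpose_mul]
    rw [Matrix.sub_mul, Matrix.mul_sub, Matrix.mul_sub]
    simp only [Matrix.mul_assoc]
    abel
  rw [frobSq_eq_trace, frobSq_eq_trace, key Y, key M, hYM]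

lemma frobSq_diagonal {d : ℕ} (v : Fin d → ℝ) :
    frobSq (diagonal v) = ∑ i, (v i) ^ 2 := by
  unfold frobSq
  refine Finset.sum_congr rfl fun i _ => ?_
  rw [Finset.sum_eq_single_of_mem i (Finset.mem_univ i)]
  · rw [Matrix.diagonal_apply_eq]
  · intro j _ hji
    rw [Matrix.diagonal_apply_ne' _ hji]
    simp

lemma mul_vecMulVec {p q r : ℕ} (A : Matrix (Fin p) (Fin q) ℝ)
    (a : Fin q → ℝ) (c : Fin r → ℝ) :
    A * vecMulVec a c = vecMulVec (A *ᵥ a) c := by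
  ext i j
  simp [Matrix.mul_apply, Matrix.vecMulVec_apply, Matrix.mulVec, dotProduct,
    Finset.sum_mul, mul_assoc]

lemma vecMulVec_mul_vecMulVec {p q r : ℕ} (a : Fin p → ℝ) (b c : Fin q → ℝ)
    (e : Fin r → ℝ) :
    vecMulVec a b * vecMulVec c e = (b ⬝ᵥ c) • vecMulVec a e := by
  ext i j
  simp only [Matrix.mul_apply, Matrix.vecMulVec_apply, Matrix.smul_apply,
    smul_eq_mul, dotProduct, Finset.mul_sum, Finset.sum_mul]
  refine Finset.sum_congr rfl fun l _ => by ring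

lemma vecMulVec_transpose' {p q : ℕ} (a : Fin p → ℝ) (b : Fin q → ℝ) :
    (vecMulVec a b)ᵀ = vecMulVec b a := by
  ext i j
  simp [Matrix.vecMulVec_apply, mul_comm]

lemma filter_lt_map {d k : ℕ} (hk : k ≤ d) :
    (Finset.univ.filter (fun i : Fin d => (i : ℕ) < k)) =
      Finset.map ⟨Fin.castLE hk, Fin.castLE_injective hk⟩ Finset.univ := by
  ext j
  simp only [Finset.mem_filter, Finset.mem_univ, true_and, Finset.mem_map,
    Function.Embedding.coeFn_mk]
  constructor
  · intro h
    exact ⟨⟨(j : ℕ), h⟩, by ext; rfl⟩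
  · rintro ⟨i, -, rfl⟩
    exact i.isLt

lemma card_filter_lt {d k : ℕ} (hk : k ≤ d) :
    (Finset.univ.filter (fun i : Fin d => (i : ℕ) < k)).card = k := by
  rw [filter_lt_map hk, Finset.card_map, Finset.card_univ, Fintype.card_fin]

lemma key_scalar {d k : ℕ} (hk : k < d) (μ : Fin d → ℝ) (hpos : ∀ i, 0 < μ i)
    (hsort : Antitone μ)
    (hgap : ∀ i j : Fin d, (i : ℕ) < k → k ≤ (j : ℕ) → μ j < μ i)
    (t : Fin d → ℝ) (ht0 : ∀ i, 0 ≤ t i) (ht1 : ∀ i, t i ≤ 1)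
    (hsum : (d : ℝ) - k ≤ ∑ i, t i)
    (hle : ∑ i, μ i * t i ≤
      ∑ i ∈ Finset.univ.filter (fun i : Fin d => ¬ (i : ℕ) < k), μ i) :
    ∀ i : Fin d, t i = if (i : ℕ) < k then 0 else 1 := by
  classical
  set A := Finset.univ.filter (fun i : Fin d => (i : ℕ) < k) with hA
  set B := Finset.univ.filter (fun i : Fin d => ¬ (i : ℕ) < k) with hB
  have hcardA : A.card = k := card_filter_lt hk.le
  have hcardAB : A.card + B.card = d := by
    rw [hA, hB]
    rw [Finset.card_filter_add_card_filter_not]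
    simp
  have hcardB : (B.card : ℝ) = (d : ℝ) - k := by
    have : B.card = d - k := by omega
    rw [this]
    have : (k : ℝ) ≤ d := by exact_mod_cast hk.le
    push_cast [Nat.cast_sub hk.le]
    ring
  have hsplitT : ∑ i ∈ A, t i + ∑ i ∈ B, t i = ∑ i, t i :=
    Finset.sum_filter_add_sum_filter_not _ _ _
  have hsplitμt : ∑ i ∈ A, μ i * t i + ∑ i ∈ B, μ i * t i = ∑ i, μ i * t i :=
    Finset.sum_filter_add_sum_filter_not _ _ _
  have hBsub : ∑ i ∈ B, μ i * (1 - t i) = ∑ i ∈ B, μ i - ∑ i ∈ B, μ i * t i := by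
    rw [← Finset.sum_sub_distrib]
    exact Finset.sum_congr rfl fun i _ => by ring
  have hkey : ∑ i ∈ A, μ i * t i ≤ ∑ i ∈ B, μ i * (1 - t i) := by
    rw [hBsub]
    linarith [hle, hsplitμt]
  have hBt : ∑ i ∈ B, (1 - t i) = (B.card : ℝ) - ∑ i ∈ B, t i := by
    rw [Finset.sum_sub_distrib]; simp
  have hs' : ∑ i ∈ B, (1 - t i) ≤ ∑ i ∈ A, t i := by
    rw [hBt, hcardB]; linarith
  have hs'0 : 0 ≤ ∑ i ∈ B, (1 - t i) :=
    Finset.sum_nonneg fun i _ => by linarith [ht1 i]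
  have hApos : 0 ≤ ∑ i ∈ A, t i := Finset.sum_nonneg fun i _ => ht0 i
  have hAt0 : ∑ i ∈ A, t i = 0 := by
    rcases Nat.eq_zero_or_pos k with hk0 | hk0
    · have : A = ∅ := by
        rw [hA]; apply Finset.filter_false_of_mem; intro i _; omega
      rw [this, Finset.sum_empty]
    · set c1 := μ ⟨k - 1, by omega⟩ with hc1
      set c2 := μ ⟨k, hk⟩ with hc2
      have hc : c2 < c1 := hgap ⟨k - 1, by omega⟩ ⟨k, hk⟩ (show k - 1 < k by omega) (show k ≤ k from le_refl k)
      by_contra hne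
      have hgt : 0 < ∑ i ∈ A, t i := lt_of_le_of_ne hApos (Ne.symm hne)
      have h2 : c1 * ∑ i ∈ A, t i ≤ ∑ i ∈ A, μ i * t i := by
        rw [Finset.mul_sum]
        refine Finset.sum_le_sum fun i hi => ?_
        have hik : (i : ℕ) < k := by
          rw [hA] at hi; simpa using hi
        have : c1 ≤ μ i := by
          apply hsort
          rw [Fin.le_def]
          show (i : ℕ) ≤ k - 1
          omega
        exact mul_le_mul_of_nonneg_right this (ht0 i)
      have h3 : ∑ i ∈ B, μ i * (1 - t i) ≤ c2 * ∑ i ∈ B, (1 - t i) := by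
        rw [Finset.mul_sum]
        refine Finset.sum_le_sum fun i hi => ?_
        have hik : ¬ (i : ℕ) < k := by
          rw [hB] at hi; simpa using hi
        have : μ i ≤ c2 := by
          apply hsort
          rw [Fin.le_def]
          show k ≤ (i : ℕ)
          omega
        exact mul_le_mul_of_nonneg_right this (by linarith [ht1 i])
      have h4 : c2 * ∑ i ∈ B, (1 - t i) ≤ c2 * ∑ i ∈ A, t i :=
        mul_le_mul_of_nonneg_left hs' (le_of_lt (hpos _))
      nlinarith [h2, h3, h4, hkey, hc, hgt]
  have htA : ∀ i ∈ A, t i = 0 :=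
    (Finset.sum_eq_zero_iff_of_nonneg (fun i _ => ht0 i)).mp hAt0
  have hs''0 : ∑ i ∈ B, (1 - t i) = 0 := by
    rw [hAt0] at hs'
    exact le_antisymm hs' hs'0
  have htB : ∀ i ∈ B, 1 - t i = 0 :=
    (Finset.sum_eq_zero_iff_of_nonneg (fun i _ => by linarith [ht1 i])).mp hs''0
  intro i
  by_cases hik : (i : ℕ) < k
  · rw [if_pos hik]
    exact htA i (by rw [hA]; simp [hik])
  · rw [if_neg hik]
    have h := htB i (by rw [hB]; simp only [Finset.mem_filter, Finset.mem_univ, true_and]; exact hik)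
    linarith

end BHaux

set_option maxHeartbeats 2000000 in
open BHaux in
/-- Baldi–Hornik: every global minimizer of the unregularized two-layer linear
autoencoder objective has `W₂W₁` equal to the orthogonal projection onto the span of
the top `k` eigenvectors of `X Xᵀ`. -/
theorem stmt2 {d N k : ℕ} (hk : k < d) (hdN : d ≤ N)
    (X : Matrix (Fin d) (Fin N) ℝ) (hrank : X.rank = d)
    (u : Fin d → (Fin d → ℝ)) (μ : Fin d → ℝ)
    (heig : ∀ i, (X * Xᵀ) *ᵥ u i = μ i • u i)
    (horth : ∀ i j, u i ⬝ᵥ u j = if i = j then (1 : ℝ) else 0)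
    (hsort : Antitone μ)
    (hgap : ∀ i j : Fin d, (i : ℕ) < k → k ≤ (j : ℕ) → μ j < μ i)
    (W1 : Matrix (Fin k) (Fin d) ℝ) (W2 : Matrix (Fin d) (Fin k) ℝ)
    (hmin : ∀ (V1 : Matrix (Fin k) (Fin d) ℝ) (V2 : Matrix (Fin d) (Fin k) ℝ),
      frobSq (X - W2 * W1 * X) ≤ frobSq (X - V2 * V1 * X)) :
    W2 * W1 = ∑ i : Fin k,
      vecMulVec (u (Fin.castLE hk.le i)) (u (Fin.castLE hk.le i)) := by
  classical
  -- the orthogonal matrix of eigenvectors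
  set U : Matrix (Fin d) (Fin d) ℝ := Matrix.of (fun a i => u i a) with hUdef
  have hUtU : Uᵀ * U = 1 := by
    ext i j
    have : (Uᵀ * U) i j = u i ⬝ᵥ u j := by
      simp [Matrix.mul_apply, dotProduct, hUdef]
    rw [this, horth i j, Matrix.one_apply]
  have hUUt : U * Uᵀ = 1 := mul_eq_one_comm.mp hUtU
  -- positivity of eigenvalues
  have hkerXt : LinearMap.ker (Xᵀ.mulVecLin) = ⊥ := by
    have h5 := LinearMap.finrank_range_add_finrank_ker (Xᵀ.mulVecLin)
    have h6 : Module.finrank ℝ (LinearMap.range Xᵀ.mulVecLin) = d := by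
      have h7 : Xᵀ.rank = d := by rw [Matrix.rank_transpose, hrank]
      exact h7
    rw [h6, Module.finrank_pi, Fintype.card_fin] at h5
    have : Module.finrank ℝ (LinearMap.ker Xᵀ.mulVecLin) = 0 := by omega
    exact Submodule.finrank_eq_zero.mp this
  have hμpos : ∀ i, 0 < μ i := by
    intro i
    have h2 : u i ⬝ᵥ ((X * Xᵀ) *ᵥ u i) = μ i := by
      rw [heig i, dotProduct_smul, smul_eq_mul, horth i i]
      simp
    have h3 : u i ⬝ᵥ ((X * Xᵀ) *ᵥ u i) = (Xᵀ *ᵥ u i) ⬝ᵥ (Xᵀ *ᵥ u i) := by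
      rw [← Matrix.mulVec_mulVec, dotProduct_mulVec, Matrix.mulVec_transpose]
    have hnn : 0 ≤ μ i := by
      rw [← h2, h3]
      exact Finset.sum_nonneg fun a _ => mul_self_nonneg _
    rcases lt_or_eq_of_le hnn with h | h
    · exact h
    · exfalso
      have h4 : (Xᵀ *ᵥ u i) ⬝ᵥ (Xᵀ *ᵥ u i) = 0 := by rw [← h3, h2, ← h]
      have h5 : Xᵀ *ᵥ u i = 0 := by
        funext a
        have := (Finset.sum_eq_zero_iff_of_nonneg
          (fun a _ => mul_self_nonneg ((Xᵀ *ᵥ u i) a))).mp h4 a (Finset.mem_univ a)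
        have := mul_self_eq_zero.mp this
        simpa using this
      have h6 : u i ∈ LinearMap.ker (Xᵀ.mulVecLin) := by
        rw [LinearMap.mem_ker]; exact h5
      rw [hkerXt, Submodule.mem_bot] at h6
      have := horth i i
      rw [h6] at this
      simp at this
  -- square root of the eigenvalues
  set σ : Fin d → ℝ := fun i => Real.sqrt (μ i) with hσdef
  have hσpos : ∀ i, 0 < σ i := fun i => Real.sqrt_pos.mpr (hμpos i)
  have hσsq : ∀ i, σ i * σ i = μ i := fun i => Real.mul_self_sqrt (hμpos i).le
  set M : Matrix (Fin d) (Fin d) ℝ := diagonal σ with hMdef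
  have hMMt : M * Mᵀ = diagonal μ := by
    rw [hMdef, Matrix.diagonal_transpose, Matrix.diagonal_mul_diagonal,
      show (fun i => σ i * σ i) = μ from funext hσsq]
  -- Y Yᵀ = diagonal μ
  have hUXXU : Uᵀ * (X * Xᵀ) * U = diagonal μ := by
    ext i j
    have h1 : (Uᵀ * (X * Xᵀ) * U) i j = u i ⬝ᵥ ((X * Xᵀ) *ᵥ u j) := by
      rw [Matrix.mul_assoc]
      simp [Matrix.mul_apply, Matrix.mulVec, dotProduct, hUdef, Finset.mul_sum]
    rw [h1, heig j, dotProduct_smul, smul_eq_mul, horth i j]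
    by_cases hij : i = j
    · subst hij; simp [Matrix.diagonal_apply]
    · simp [Matrix.diagonal_apply, hij]
  have hYYt : (Uᵀ * X) * (Uᵀ * X)ᵀ = M * Mᵀ := by
    rw [Matrix.transpose_mul, Matrix.transpose_transpose, hMMt]
    rw [← hUXXU]
    simp only [Matrix.mul_assoc]
  -- translation of the objective
  have htrans : ∀ (V1 : Matrix (Fin k) (Fin d) ℝ) (V2 : Matrix (Fin d) (Fin k) ℝ),
      frobSq (X - V2 * V1 * X) = frobSq (M - ((Uᵀ * V2) * (V1 * U)) * M) := by
    intro V1 V2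
    have h1 : frobSq (X - V2 * V1 * X) = frobSq (Uᵀ * (X - V2 * V1 * X)) := by
      rw [frobSq_mul_orth Uᵀ (by rw [Matrix.transpose_transpose, hUtU]) _]
    have h2 : Uᵀ * (X - V2 * V1 * X) =
        (Uᵀ * X) - ((Uᵀ * V2) * (V1 * U)) * (Uᵀ * X) := by
      rw [Matrix.mul_sub]
      congr 1
      have h3 : U * (Uᵀ * X) = X := by rw [← Matrix.mul_assoc, hUUt, Matrix.one_mul]
      simp only [Matrix.mul_assoc, h3]
    rw [h1, h2]
    exact frobSq_sub_mul (Uᵀ * X) M hYYt _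
  set B₀ : Matrix (Fin d) (Fin d) ℝ := (Uᵀ * W2) * (W1 * U) with hB₀def
  have hmin' : ∀ (V1 : Matrix (Fin k) (Fin d) ℝ) (V2 : Matrix (Fin d) (Fin k) ℝ),
      frobSq (M - B₀ * M) ≤ frobSq (M - (V2 * V1) * M) := by
    intro V1 V2
    have h := hmin (V1 * Uᵀ) (U * V2)
    rw [htrans W1 W2, htrans (V1 * Uᵀ) (U * V2)] at h
    have e2 : Uᵀ * (U * V2) = V2 := by rw [← Matrix.mul_assoc, hUtU, Matrix.one_mul]
    have e1 : (V1 * Uᵀ) * U = V1 := by rw [Matrix.mul_assoc, hUtU, Matrix.mul_one]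
    rw [e1, e2] at h
    exact h
  -- the candidate projection in the new coordinates
  set Qmat : Matrix (Fin d) (Fin d) ℝ :=
    diagonal (fun i : Fin d => if (i : ℕ) < k then (1 : ℝ) else 0) with hQdef
  set V1s : Matrix (Fin k) (Fin d) ℝ :=
    Matrix.of (fun i j => if Fin.castLE hk.le i = j then (1 : ℝ) else 0) with hV1sdef
  have hQfact : V1sᵀ * V1s = Qmat := by
    ext a b
    rw [Matrix.mul_apply]
    by_cases ha : (a : ℕ) < k
    · have hrw : ∀ i : Fin k, Fin.castLE hk.le i = a ↔ i = ⟨(a : ℕ), ha⟩ := by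
        intro i
        rw [Fin.ext_iff, Fin.ext_iff]
        simp [Fin.coe_castLE]
      rw [Finset.sum_eq_single_of_mem (⟨(a : ℕ), ha⟩ : Fin k) (Finset.mem_univ _)]
      · have h1 : Fin.castLE hk.le (⟨(a : ℕ), ha⟩ : Fin k) = a := by ext; rfl
        simp only [hV1sdef, Matrix.transpose_apply, Matrix.of_apply, h1, if_pos rfl,
          one_mul]
        by_cases hab : a = b
        · subst hab; simp [hQdef, Matrix.diagonal_apply, ha]
        · simp [hQdef, Matrix.diagonal_apply, hab]
      · intro i _ hine
        have : Fin.castLE hk.le i ≠ a := by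
          rw [Ne, hrw i]; exact hine
        simp [hV1sdef, this]
    · rw [Finset.sum_eq_zero]
      · symm
        simp only [hQdef, Matrix.diagonal_apply]
        by_cases hab : a = b
        · subst hab
          simp [ha]
        · simp [hab]
      · intro i _
        have : Fin.castLE hk.le i ≠ a := by
          intro h
          apply ha
          rw [← h]
          exact i.isLt
        simp [hV1sdef, this]
  have hQM : frobSq (M - Qmat * M) =
      ∑ i ∈ Finset.univ.filter (fun i : Fin d => ¬ (i : ℕ) < k), μ i := by
    have h1 : M - Qmat * M =
        diagonal (fun i : Fin d => if (i : ℕ) < k then 0 else σ i) := by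
      rw [hQdef, hMdef, Matrix.diagonal_mul_diagonal, Matrix.diagonal_sub]
      refine congrArg Matrix.diagonal (funext fun i => ?_)
      by_cases hik : (i : ℕ) < k <;> simp [hik]
    rw [h1, frobSq_diagonal, Finset.sum_filter]
    refine Finset.sum_congr rfl fun i _ => ?_
    by_cases hik : (i : ℕ) < k
    · rw [if_pos hik, if_neg (not_not_intro hik)]
      simp
    · rw [if_neg hik, if_pos hik, sq, hσsq i]
  have hupper : frobSq (M - B₀ * M) ≤
      ∑ i ∈ Finset.univ.filter (fun i : Fin d => ¬ (i : ℕ) < k), μ i := by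
    have h := hmin' V1s V1sᵀ
    rw [hQfact] at h
    rw [← hQM]
    exact h
  -- the orthogonal projection onto the kernel of (W1 U) M
  set A1 : Matrix (Fin k) (Fin d) ℝ := (W1 * U) * M with hA1def
  set g : EuclideanSpace ℝ (Fin d) →ₗ[ℝ] (Fin k → ℝ) :=
    A1.mulVecLin ∘ₗ (WithLp.linearEquiv 2 ℝ (Fin d → ℝ)).toLinearMap with hgdef
  set K := LinearMap.ker g with hKdef
  have hrangeg : LinearMap.range g = LinearMap.range A1.mulVecLin := by
    rw [hgdef, LinearMap.range_comp, LinearEquiv.range, Submodule.map_top]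
  have hfinK : A1.rank + Module.finrank ℝ K = d := by
    have h := LinearMap.finrank_range_add_finrank_ker g
    rw [hrangeg, finrank_euclideanSpace_fin] at h
    exact h
  have hKn : (d : ℝ) - k ≤ (Module.finrank ℝ K : ℝ) := by
    have h := Matrix.rank_le_card_height A1
    rw [Fintype.card_fin] at h
    have h2 : (A1.rank : ℝ) + (Module.finrank ℝ K : ℝ) = d := by exact_mod_cast hfinK
    have h3 : (A1.rank : ℝ) ≤ k := by exact_mod_cast h
    linarith
  set n := Module.finrank ℝ K with hndef
  set b := stdOrthonormalBasis ℝ K with hbdef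
  set v : Fin n → (Fin d → ℝ) :=
    fun i => ((b i : K) : EuclideanSpace ℝ (Fin d)) with hvdef
  have hv : ∀ i j, v i ⬝ᵥ v j = if i = j then 1 else 0 := by
    intro i j
    have h := (orthonormal_iff_ite.mp b.orthonormal) i j
    rw [Submodule.coe_inner, PiLp.inner_apply] at h
    simp [dotProduct, hvdef, RCLike.inner_apply, starRingEnd_apply] at h ⊢
    rw [← h]
    exact Finset.sum_congr rfl fun x _ => mul_comm _ _
  have hvker : ∀ i, A1 *ᵥ v i = 0 := by
    intro i
    exact LinearMap.map_coe_ker g (b i)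
  set Pmat : Matrix (Fin d) (Fin d) ℝ := ∑ i : Fin n, vecMulVec (v i) (v i) with hPmatdef
  have hPmatsym : Pmatᵀ = Pmat := by
    rw [hPmatdef, Matrix.transpose_sum]
    exact Finset.sum_congr rfl fun i _ => vecMulVec_transpose' _ _
  have hPmatidem : Pmat * Pmat = Pmat := by
    have hterm : ∀ i, vecMulVec (v i) (v i) * Pmat = vecMulVec (v i) (v i) := by
      intro i
      rw [hPmatdef, Matrix.mul_sum]
      rw [Finset.sum_congr rfl fun j _ =>
        BHaux.vecMulVec_mul_vecMulVec (v i) (v i) (v j) (v j)]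
      rw [Finset.sum_congr rfl fun j (_ : j ∈ Finset.univ) => by rw [hv i j]]
      simp only [ite_smul, one_smul, zero_smul]
      rw [Finset.sum_ite_eq]
      simp
    conv_lhs => rw [hPmatdef]
    rw [Matrix.sum_mul, Finset.sum_congr rfl fun i _ => hterm i]
  have hPmatrow : ∀ i, Pmat i i = ∑ j, (Pmat i j) ^ 2 := by
    intro i
    conv_lhs => rw [← hPmatidem]
    rw [show Pmat * Pmat = Pmat * Pmatᵀ by rw [hPmatsym]]
    simp [Matrix.mul_apply, Matrix.transpose_apply, sq]
  set t : Fin d → ℝ := fun i => Pmat i i with htdef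
  have ht0 : ∀ i, 0 ≤ t i := by
    intro i
    rw [htdef]
    simp only
    rw [hPmatrow i]
    exact Finset.sum_nonneg fun j _ => sq_nonneg _
  have ht1 : ∀ i, t i ≤ 1 := by
    intro i
    have h := hPmatrow i
    have hterm : (Pmat i i) ^ 2 ≤ ∑ j, (Pmat i j) ^ 2 :=
      Finset.single_le_sum (f := fun j => (Pmat i j) ^ 2)
        (fun j _ => sq_nonneg _) (Finset.mem_univ i)
    have h0 := ht0 i
    rw [htdef] at h0 ⊢
    simp only at h0 ⊢
    nlinarith
  have htr : ∑ i, t i = (n : ℝ) := by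
    rw [htdef]
    simp only
    have h1 : ∀ i : Fin d, Pmat i i = ∑ l : Fin n, v l i * v l i := by
      intro i
      rw [hPmatdef, Matrix.sum_apply]
      exact Finset.sum_congr rfl fun l _ => by rw [Matrix.vecMulVec_apply]
    rw [Finset.sum_congr rfl fun i _ => h1 i, Finset.sum_comm]
    have h2 : ∀ l : Fin n, ∑ i : Fin d, v l i * v l i = 1 := by
      intro l
      have := hv l l
      simpa [dotProduct] using this
    rw [Finset.sum_congr rfl fun l _ => h2 l]
    simp
  have hA1Pmat : A1 * Pmat = 0 := by
    rw [hPmatdef, Matrix.mul_sum]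
    refine Finset.sum_eq_zero fun i _ => ?_
    rw [BHaux.mul_vecMulVec, hvker i]
    ext a c
    simp [Matrix.vecMulVec_apply]
  have hBM0 : (B₀ * M) * Pmat = 0 := by
    have h : B₀ * M = (Uᵀ * W2) * A1 := by
      rw [hB₀def, hA1def, Matrix.mul_assoc]
    rw [h, Matrix.mul_assoc, hA1Pmat, Matrix.mul_zero]
  set Emat : Matrix (Fin d) (Fin d) ℝ := M - B₀ * M with hEdef
  have hsplit : frobSq Emat = frobSq (Emat * Pmat) + frobSq (Emat * (1 - Pmat)) := by
    rw [frobSq_eq_trace, frobSq_eq_trace, frobSq_eq_trace]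
    have h1 : (Emat * Pmat) * (Emat * Pmat)ᵀ = Emat * Pmat * Ematᵀ := by
      rw [Matrix.transpose_mul, hPmatsym]
      rw [Matrix.mul_assoc, ← Matrix.mul_assoc Pmat Pmat, hPmatidem, Matrix.mul_assoc,
        ← Matrix.mul_assoc]
    have h2 : (1 - Pmat) * (1 - Pmat) = 1 - Pmat := by
      rw [Matrix.mul_sub, Matrix.sub_mul, Matrix.sub_mul, hPmatidem]
      simp only [Matrix.one_mul, Matrix.mul_one]
      abel
    have h3 : (Emat * (1 - Pmat)) * (Emat * (1 - Pmat))ᵀ = Emat * (1 - Pmat) * Ematᵀ := by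
      rw [Matrix.transpose_mul]
      have h4 : (1 - Pmat)ᵀ = 1 - Pmat := by
        rw [Matrix.transpose_sub, Matrix.transpose_one, hPmatsym]
      rw [h4, Matrix.mul_assoc, ← Matrix.mul_assoc (1 - Pmat) (1 - Pmat), h2,
        Matrix.mul_assoc, ← Matrix.mul_assoc]
    rw [h1, h3, ← Matrix.trace_add]
    congr 1
    rw [← Matrix.add_mul, ← Matrix.mul_add]
    have hPP : Pmat + (1 - Pmat) = 1 := by abel
    rw [hPP, Matrix.mul_one]
  have hEPmat : Emat * Pmat = M * Pmat := by
    rw [hEdef, Matrix.sub_mul, hBM0, sub_zero]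
  have hMPmatfrob : frobSq (M * Pmat) = ∑ i, μ i * t i := by
    unfold frobSq
    refine Finset.sum_congr rfl fun i _ => ?_
    have h1 : ∀ j, (M * Pmat) i j = σ i * Pmat i j := by
      intro j
      rw [hMdef, Matrix.diagonal_mul]
    rw [Finset.sum_congr rfl fun j _ => by rw [h1 j, mul_pow]]
    rw [← Finset.mul_sum, ← hPmatrow i]
    rw [htdef]
    simp only
    rw [sq, hσsq i]
  have hlowsum : ∑ i, μ i * t i ≤
      ∑ i ∈ Finset.univ.filter (fun i : Fin d => ¬ (i : ℕ) < k), μ i := by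
    have h1 : frobSq (M * Pmat) ≤ frobSq Emat := by
      rw [hsplit, hEPmat]
      linarith [frobSq_nonneg (Emat * (1 - Pmat))]
    rw [hMPmatfrob] at h1
    linarith
  have hsum : (d : ℝ) - k ≤ ∑ i, t i := by rw [htr]; exact hKn
  have ht := key_scalar hk μ hμpos hsort hgap t ht0 ht1 hsum hlowsum
  -- characterize Pmat
  have hrow_zero : ∀ i : Fin d, t i = 0 → ∀ j, Pmat i j = 0 := by
    intro i h0 j
    have hs : ∑ j, (Pmat i j) ^ 2 = 0 := by rw [← hPmatrow i]; exact h0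
    have := (Finset.sum_eq_zero_iff_of_nonneg
      (fun j _ => sq_nonneg _)).mp hs j (Finset.mem_univ j)
    exact (pow_eq_zero_iff two_ne_zero).mp this
  have hrow_one : ∀ i : Fin d, t i = 1 → ∀ j, j ≠ i → Pmat i j = 0 := by
    intro i h1 j hji
    have hs := hPmatrow i
    have hsplit2 : (Pmat i i) ^ 2 + ∑ j ∈ Finset.univ.erase i, (Pmat i j) ^ 2
        = ∑ j, (Pmat i j) ^ 2 :=
      Finset.add_sum_erase Finset.univ (fun j => (Pmat i j) ^ 2) (Finset.mem_univ i)
    have hii : Pmat i i = 1 := h1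
    have hii2 : (Pmat i i) ^ 2 = 1 := by rw [hii]; norm_num
    have herase : ∑ j ∈ Finset.univ.erase i, (Pmat i j) ^ 2 = 0 := by
      rw [hii] at hs
      linarith [hsplit2, hs, hii2]
    have := (Finset.sum_eq_zero_iff_of_nonneg
      (fun j _ => sq_nonneg _)).mp herase j (Finset.mem_erase.mpr ⟨hji, Finset.mem_univ j⟩)
    exact (pow_eq_zero_iff two_ne_zero).mp this
  have hPmatdiag : Pmat = diagonal (fun i : Fin d => if (i : ℕ) < k then (0 : ℝ) else 1) := by
    ext i j
    by_cases hik : (i : ℕ) < k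
    · have h0 : t i = 0 := by rw [ht i, if_pos hik]
      rw [hrow_zero i h0 j]
      rcases eq_or_ne i j with hij | hij
      · subst hij
        rw [Matrix.diagonal_apply_eq, if_pos hik]
      · rw [Matrix.diagonal_apply_ne _ hij]
    · by_cases hij : i = j
      · subst hij
        have h1 : t i = 1 := by rw [ht i, if_neg hik]
        rw [Matrix.diagonal_apply_eq, if_neg hik]
        exact h1
      · rw [hrow_one i (by rw [ht i, if_neg hik]) j (Ne.symm hij),
          Matrix.diagonal_apply_ne _ hij]
  have h1Pmat : (1 : Matrix (Fin d) (Fin d) ℝ) - Pmat = Qmat := by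
    rw [hPmatdiag, hQdef, ← Matrix.diagonal_one, Matrix.diagonal_sub]
    refine congrArg Matrix.diagonal (funext fun i => ?_)
    by_cases hik : (i : ℕ) < k <;> simp [hik]
  have hμt_eq : ∑ i, μ i * t i =
      ∑ i ∈ Finset.univ.filter (fun i : Fin d => ¬ (i : ℕ) < k), μ i := by
    rw [Finset.sum_filter]
    refine Finset.sum_congr rfl fun i _ => ?_
    rw [ht i]
    by_cases hik : (i : ℕ) < k <;> simp [hik]
  have hE1Pmat : Emat * (1 - Pmat) = 0 := by
    apply frobSq_eq_zero_of_nonpos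
    have h1 : frobSq (Emat * (1 - Pmat)) = frobSq Emat - frobSq (M * Pmat) := by
      rw [hsplit, hEPmat]; ring
    rw [h1, hMPmatfrob, hμt_eq]
    linarith [hupper]
  -- conclude B₀ = Qmat
  have h6 : B₀ * M = (B₀ * M) * Qmat := by
    rw [← h1Pmat, Matrix.mul_sub, Matrix.mul_one, hBM0, sub_zero]
  have h7 : (B₀ * M) * Qmat = M * Qmat := by
    rw [h1Pmat] at hE1Pmat
    have h7a : (M - B₀ * M) * Qmat = 0 := hE1Pmat
    rw [Matrix.sub_mul] at h7a
    exact (sub_eq_zero.mp h7a).symm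
  have hBMQ : B₀ * M = M * Qmat := by rw [h6, h7]
  set M' : Matrix (Fin d) (Fin d) ℝ := diagonal (fun i => (σ i)⁻¹) with hM'def
  have hMM' : M * M' = 1 := by
    rw [hMdef, hM'def, Matrix.diagonal_mul_diagonal, ← Matrix.diagonal_one]
    exact congrArg Matrix.diagonal
      (funext fun i => mul_inv_cancel₀ (ne_of_gt (hσpos i)))
  have hB₀Q : B₀ = Qmat := by
    have h8 : B₀ = (B₀ * M) * M' := by
      rw [Matrix.mul_assoc, hMM', Matrix.mul_one]
    rw [h8, hBMQ]
    rw [hMdef, hQdef, hM'def, Matrix.diagonal_mul_diagonal,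
      Matrix.diagonal_mul_diagonal]
    refine congrArg Matrix.diagonal (funext fun i => ?_)
    by_cases hik : (i : ℕ) < k
    · simp [hik, mul_inv_cancel₀ (ne_of_gt (hσpos i))]
    · simp [hik]
  -- convert back
  have h9 : W2 * W1 = U * Qmat * Uᵀ := by
    have h10 : U * B₀ * Uᵀ = W2 * W1 := by
      rw [hB₀def]
      have e1 : U * (Uᵀ * W2 * (W1 * U)) = W2 * (W1 * U) := by
        rw [← Matrix.mul_assoc U (Uᵀ * W2) (W1 * U), ← Matrix.mul_assoc U Uᵀ W2,
          hUUt, Matrix.one_mul]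
      rw [e1, Matrix.mul_assoc W2 (W1 * U) Uᵀ, Matrix.mul_assoc W1 U Uᵀ,
        hUUt, Matrix.mul_one]
    rw [← h10, hB₀Q]
  rw [h9]
  ext a c
  have hLHS : (U * Qmat * Uᵀ) a c =
      ∑ j : Fin d, (if (j : ℕ) < k then u j a * u j c else 0) := by
    rw [Matrix.mul_apply]
    refine Finset.sum_congr rfl fun j _ => ?_
    rw [Matrix.mul_diagonal, Matrix.transpose_apply]
    simp only [hUdef, Matrix.of_apply]
    by_cases hjk : (j : ℕ) < k <;> simp [hjk] <;> ring
  rw [hLHS, ← Finset.sum_filter, filter_lt_map hk.le, Finset.sum_map]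
  rw [Matrix.sum_apply]
  refine Finset.sum_congr rfl fun i _ => ?_
  simp [Matrix.vecMulVec_apply, Function.Embedding.coeFn_mk]
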